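/- Let ℓ be a prime and let n ≥ j ≥ 0 and u be integers with j ≥ max(u, 0) and n ≥ j. If M is an (n−u)×n matrix with entries chosen independently and uniformly at random from the field F_ℓ, then the probability that the kernel of M (as a linear map F_ℓ^n → F_ℓ^{n−u}) has dimension exactly j equals ℓ^{−j(j−u)} · ∏_{k=1}^{j−u} (1−ℓ^{−k−n+j})/(1−ℓ^{−k}) · ∏_{k=1}^{j} (1−ℓ^{−k})^{−1} · ∏_{k=1}^{n} (1−ℓ^{−k}). -/

import Mathlib

open Finset LinearMap Matrix
set_option linter.unusedSectionVars false
variable {F : Type*} [Field F] [Fintype F] [DecidableEq F]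
local notation "q" => Fintype.card F

lemma card_inj (k m : ℕ) (hk : k ≤ m) :
    Nat.card {M : Matrix (Fin m) (Fin k) F // Function.Injective M.mulVecLin} =
      ∏ i ∈ range k, (q ^ m - q ^ i) := by
  have e : {M : Matrix (Fin m) (Fin k) F // Function.Injective M.mulVecLin} ≃
      {s : Fin k → (Fin m → F) // LinearIndependent F s} :=
    { toFun := fun M => ⟨fun i => M.1.transpose i, by
        have := M.2
        rwa [Matrix.coe_mulVecLin, Matrix.mulVec_injective_iff] at this⟩
      invFun := fun s => ⟨(Matrix.of s.1).transpose, by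
        rw [Matrix.coe_mulVecLin, Matrix.mulVec_injective_iff]
        exact s.2⟩
      left_inv := fun M => rfl
      right_inv := fun s => rfl }
  rw [Nat.card_congr e, card_linearIndependent (by simpa using hk)]
  simp only [Module.finrank_fintype_fun_eq_card, Fintype.card_fin]
  exact Fin.prod_univ_eq_prod_range (fun i => q ^ m - q ^ i) k

lemma surj_iff_inj_transpose {k n : ℕ} (M : Matrix (Fin k) (Fin n) F) :
    Function.Surjective M.mulVecLin ↔ Function.Injective M.transpose.mulVecLin := by
  rw [← LinearMap.range_eq_top, ← LinearMap.ker_eq_bot]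
  have h1 : M.rank = Module.finrank F (LinearMap.range M.mulVecLin) := rfl
  have h3 : Mᵀ.rank = Module.finrank F (LinearMap.range Mᵀ.mulVecLin) := rfl
  have h2 := finrank_range_add_finrank_ker Mᵀ.mulVecLin
  have h4 := Matrix.rank_transpose M
  simp only [Module.finrank_fintype_fun_eq_card, Fintype.card_fin] at h2
  constructor
  · intro h
    have hrk : M.rank = k := by rw [h1, h]; simp
    rw [← Submodule.finrank_eq_zero]
    omega
  · intro h
    rw [← Submodule.finrank_eq_zero] at h
    apply Submodule.eq_top_of_finrank_eq
    simp only [Module.finrank_fintype_fun_eq_card, Fintype.card_fin]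
    omega

lemma card_surj (n k : ℕ) (hk : k ≤ n) :
    Nat.card {M : Matrix (Fin k) (Fin n) F // Function.Surjective M.mulVecLin} =
      ∏ i ∈ range k, (q ^ n - q ^ i) := by
  have e : {M : Matrix (Fin k) (Fin n) F // Function.Surjective M.mulVecLin} ≃
      {M : Matrix (Fin n) (Fin k) F // Function.Injective M.mulVecLin} :=
    { toFun := fun M => ⟨M.1.transpose, (surj_iff_inj_transpose M.1).1 M.2⟩
      invFun := fun M => ⟨M.1.transpose, (surj_iff_inj_transpose M.1.transpose).2
        (by rw [Matrix.transpose_transpose]; exact M.2)⟩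
      left_inv := fun M => rfl
      right_inv := fun M => rfl }
  rw [Nat.card_congr e, card_inj k n hk]

lemma card_lequiv (k : ℕ) :
    Nat.card ((Fin k → F) ≃ₗ[F] (Fin k → F)) = ∏ i ∈ range k, (q ^ k - q ^ i) := by
  rw [Nat.card_congr ((Matrix.GeneralLinearGroup.toLin.trans
      (LinearMap.GeneralLinearGroup.generalLinearEquiv F (Fin k → F))).toEquiv.symm),
    Matrix.card_GL_field]
  exact Fin.prod_univ_eq_prod_range (fun i => q ^ k - q ^ i) k
open Finset LinearMap Matrix
set_option linter.unusedSectionVars false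
variable {F : Type*} [Field F] [Fintype F] [DecidableEq F]

lemma main_fib (n r j k : ℕ) (hjk : j + k = n) :
    Nat.card {s : (Fin n → F) →ₗ[F] (Fin k → F) // Function.Surjective s} *
      Nat.card {i : (Fin k → F) →ₗ[F] (Fin r → F) // Function.Injective i} =
    Nat.card {f : (Fin n → F) →ₗ[F] (Fin r → F) // Module.finrank F (LinearMap.ker f) = j} *
      Nat.card ((Fin k → F) ≃ₗ[F] (Fin k → F)) := by
  rw [← Nat.card_prod, ← Nat.card_prod]
  apply Nat.card_congr
  set S := {s : (Fin n → F) →ₗ[F] (Fin k → F) // Function.Surjective s} with hS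
  set I := {i : (Fin k → F) →ₗ[F] (Fin r → F) // Function.Injective i} with hI
  set A := {f : (Fin n → F) →ₗ[F] (Fin r → F) // Module.finrank F (LinearMap.ker f) = j} with hA
  have hker : ∀ (p : S × I), Module.finrank F (LinearMap.ker (p.2.1 ∘ₗ p.1.1)) = j := by
    intro p
    rw [ker_comp_of_ker_eq_bot _ (ker_eq_bot.2 p.2.2)]
    have h := finrank_range_add_finrank_ker p.1.1
    rw [range_eq_top.2 p.1.2] at h
    simp only [finrank_top, Module.finrank_fintype_fun_eq_card, Fintype.card_fin] at h
    omega
  let Φ : S × I → A := fun p => ⟨p.2.1 ∘ₗ p.1.1, hker p⟩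
  have hrange : ∀ f : A, Module.finrank F (LinearMap.range f.1) = k := by
    intro f
    have h := finrank_range_add_finrank_ker f.1
    rw [f.2] at h
    simp only [Module.finrank_fintype_fun_eq_card, Fintype.card_fin] at h
    omega
  have he : ∀ f : A, Nonempty ((Fin k → F) ≃ₗ[F] LinearMap.range f.1) := fun f =>
    FiniteDimensional.nonempty_linearEquiv_of_finrank_eq (by
      simp [Module.finrank_fintype_fun_eq_card, hrange f])
  let e : ∀ f : A, (Fin k → F) ≃ₗ[F] LinearMap.range f.1 := fun f => (he f).some
  have hmem : ∀ (f : A) (p : {p : S × I // Φ p = f}) (x : Fin k → F),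
      p.1.2.1 x ∈ LinearMap.range f.1 := by
    intro f p x
    have hcomp : f.1 = p.1.2.1 ∘ₗ p.1.1.1 := (congrArg Subtype.val p.2).symm
    obtain ⟨y, hy⟩ := p.1.1.2 x
    exact ⟨y, by rw [hcomp]; simp [hy]⟩
  have fiberEquiv : ∀ f : A, {p : S × I // Φ p = f} ≃ ((Fin k → F) ≃ₗ[F] (Fin k → F)) := by
    intro f
    have φinj : ∀ p : {p : S × I // Φ p = f}, Function.Injective
        ((e f).symm.toLinearMap ∘ₗ LinearMap.codRestrict _ p.1.2.1 (hmem f p)) := by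
      intro p
      rw [LinearMap.coe_comp]
      refine (e f).symm.injective.comp ?_
      rw [← LinearMap.ker_eq_bot, LinearMap.ker_codRestrict, LinearMap.ker_eq_bot]
      exact p.1.2.2
    refine
      { toFun := fun p => LinearEquiv.ofBijective
          ((e f).symm.toLinearMap ∘ₗ LinearMap.codRestrict _ p.1.2.1 (hmem f p))
          ⟨φinj p, LinearMap.injective_iff_surjective.1 (φinj p)⟩
        invFun := fun g =>
          ⟨(⟨g.symm.toLinearMap ∘ₗ (e f).symm.toLinearMap ∘ₗ f.1.rangeRestrict, by
              rw [LinearMap.coe_comp, LinearMap.coe_comp]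
              exact g.symm.surjective.comp
                ((e f).symm.surjective.comp f.1.surjective_rangeRestrict)⟩,
            ⟨(LinearMap.range f.1).subtype ∘ₗ (e f).toLinearMap ∘ₗ g.toLinearMap, by
              rw [LinearMap.coe_comp, LinearMap.coe_comp]
              exact (LinearMap.range f.1).injective_subtype.comp
                ((e f).injective.comp g.injective)⟩),
            by
              apply Subtype.ext
              apply LinearMap.ext
              intro x
              simp [Φ]⟩
        left_inv := ?_
        right_inv := ?_ }
    · rintro ⟨⟨⟨s, hs⟩, ⟨i, hi⟩⟩, hp⟩
      have hcomp : f.1 = i ∘ₗ s := (congrArg Subtype.val hp).symm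
      refine Subtype.ext (Prod.ext (Subtype.ext ?_) (Subtype.ext ?_))
      · apply LinearMap.ext
        intro x
        simp only [LinearMap.coe_comp, Function.comp_apply, LinearEquiv.coe_coe]
        rw [LinearEquiv.symm_apply_eq]
        erw [LinearEquiv.ofBijective_apply]
        simp only [LinearMap.coe_comp, Function.comp_apply,
          LinearMap.codRestrict_apply, LinearEquiv.coe_coe]
        congr 1
        exact Subtype.ext (by simp [hcomp])
      · apply LinearMap.ext
        intro x
        simp only [LinearMap.coe_comp, Function.comp_apply, LinearEquiv.coe_coe,
          LinearEquiv.ofBijective_apply, LinearMap.codRestrict_apply, Submodule.coe_subtype]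
        erw [LinearEquiv.ofBijective_apply ((e f).symm.toLinearMap ∘ₗ _)]
        simp
    · intro g
      apply LinearEquiv.toLinearMap_injective
      apply LinearMap.ext
      intro x
      simp only [LinearEquiv.coe_coe, LinearEquiv.ofBijective_apply, LinearMap.coe_comp,
        Function.comp_apply, LinearMap.codRestrict_apply, Submodule.coe_subtype]
      erw [LinearEquiv.ofBijective_apply]
      simp only [LinearMap.coe_comp, Function.comp_apply, LinearMap.codRestrict_apply,
        LinearEquiv.coe_coe]
      rw [LinearEquiv.symm_apply_eq]
      exact Subtype.ext (by simp)
  exact (Equiv.sigmaFiberEquiv Φ).symm.trans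
    ((Equiv.sigmaCongrRight fiberEquiv).trans (Equiv.sigmaEquivProd A _))
open Finset

-- g a := ∏_{i<a} (1 - ℓ^{-(i+1)})
noncomputable def gp (ℓ : ℕ) (a : ℕ) : ℝ := ∏ i ∈ range a, (1 - (ℓ : ℝ) ^ (-(i : ℤ) - 1))

lemma gp_pos {ℓ : ℕ} (hℓ : 2 ≤ ℓ) (a : ℕ) : 0 < gp ℓ a := by
  apply Finset.prod_pos
  intro i _
  have h1 : (ℓ : ℝ) ^ (-(i : ℤ) - 1) < 1 := by
    have := zpow_right_strictMono₀ (show (1:ℝ) < ℓ by exact_mod_cast hℓ)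
      (show (-(i : ℤ) - 1) < 0 by omega)
    simpa using this
  linarith

lemma gp_ne {ℓ : ℕ} (hℓ : 2 ≤ ℓ) (a : ℕ) : gp ℓ a ≠ 0 := (gp_pos hℓ a).ne'

-- key product formula
lemma prod_sub_pow {ℓ : ℕ} (hℓ : 2 ≤ ℓ) {a b : ℕ} (hba : b ≤ a) :
    ∏ i ∈ range b, ((ℓ : ℝ) ^ a - (ℓ : ℝ) ^ i) =
      (ℓ : ℝ) ^ (a * b) * (gp ℓ a / gp ℓ (a - b)) := by
  have hℓ0 : (ℓ : ℝ) ≠ 0 := by positivity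
  have h1 : ∀ i ∈ range b, ((ℓ : ℝ) ^ a - (ℓ : ℝ) ^ i)
      = (ℓ : ℝ) ^ a * (1 - (ℓ : ℝ) ^ ((i : ℤ) - (a : ℤ))) := by
    intro i _
    rw [mul_sub, mul_one, ← zpow_natCast (ℓ : ℝ) a, ← zpow_add₀ hℓ0]
    ring_nf
    rw [← zpow_natCast (ℓ : ℝ) i]
  rw [Finset.prod_congr rfl h1, Finset.prod_mul_distrib, Finset.prod_const, card_range,
    ← pow_mul]
  congr 1
  -- ∏_{i<b} (1 - ℓ^(i-a)) = gp a / gp (a-b)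
  have key : gp ℓ a = gp ℓ (a - b) * ∏ i ∈ range b, (1 - (ℓ : ℝ) ^ ((i : ℤ) - (a : ℤ))) := by
    rw [← Finset.prod_range_reflect (fun i => (1 - (ℓ : ℝ) ^ ((i : ℤ) - (a : ℤ)))) b]
    unfold gp
    rw [show a = (a - b) + b by omega, Finset.prod_range_add]
    congr 1
    · rw [show (a-b) + b - b = a - b by omega]
    apply Finset.prod_congr rfl
    intro i hi
    simp only [mem_range] at hi
    congr 1
    congr 1
    omega
  rw [key, mul_comm (gp ℓ (a - b)), mul_div_assoc, div_self (gp_ne hℓ _), mul_one]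

lemma gp_zero (ℓ : ℕ) : gp ℓ 0 = 1 := by simp [gp]

lemma real_id (ℓ : ℕ) (hℓ : 2 ≤ ℓ) (n j r d k : ℕ) (u : ℤ)
    (hjk : j + k = n) (hkd : k + d = r) (hd : (d : ℤ) = (j : ℤ) - u) :
    ((∏ i ∈ range k, ((ℓ:ℝ)^n - (ℓ:ℝ)^i)) * (∏ i ∈ range k, ((ℓ:ℝ)^r - (ℓ:ℝ)^i))) /
      ((∏ i ∈ range k, ((ℓ:ℝ)^k - (ℓ:ℝ)^i)) * (ℓ:ℝ)^(r*n)) =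
    (ℓ : ℝ) ^ (-(j : ℤ) * ((j : ℤ) - u)) *
      (∏ kk ∈ Finset.range d,
        (1 - (ℓ : ℝ) ^ (-((kk : ℤ) + 1) - (n : ℤ) + (j : ℤ))) /
          (1 - (ℓ : ℝ) ^ (-((kk : ℤ) + 1)))) *
      (∏ kk ∈ Finset.range j, (1 - (ℓ : ℝ) ^ (-((kk : ℤ) + 1)))⁻¹) *
      (∏ kk ∈ Finset.range n, (1 - (ℓ : ℝ) ^ (-((kk : ℤ) + 1)))) := by
  have hℓ0 : (ℓ : ℝ) ≠ 0 := by positivity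
  have hkn : k ≤ n := by omega
  have hkr : k ≤ r := by omega
  have hpow : (ℓ:ℝ)^(n*k) * (ℓ:ℝ)^(r*k)
      = (ℓ:ℝ)^(-(j:ℤ)*((j:ℤ)-u)) * ((ℓ:ℝ)^(k*k) * (ℓ:ℝ)^(r*n)) := by
    rw [← zpow_natCast (ℓ:ℝ) (n*k), ← zpow_natCast (ℓ:ℝ) (r*k), ← zpow_natCast (ℓ:ℝ) (k*k),
      ← zpow_natCast (ℓ:ℝ) (r*n), ← zpow_add₀ hℓ0, ← zpow_add₀ hℓ0, ← zpow_add₀ hℓ0]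
    congr 1
    push_cast
    rw [← hd]
    have hn' : (n:ℤ) = j + k := by omega
    have hr' : (r:ℤ) = k + d := by omega
    rw [hn', hr']
    ring
  -- rewrite the three LHS products
  rw [prod_sub_pow hℓ hkn, prod_sub_pow hℓ hkr, prod_sub_pow hℓ (le_refl k),
    show n - k = j by omega, show r - k = d by omega, Nat.sub_self, gp_zero]
  -- RHS middle product
  have hmidd : ∏ kk ∈ Finset.range d, (1 - (ℓ : ℝ) ^ (-((kk : ℤ) + 1))) = gp ℓ d :=
    Finset.prod_congr rfl (fun i _ => by rw [show -((i : ℤ) + 1) = -(i:ℤ) - 1 by ring])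
  have hnum : gp ℓ r = gp ℓ k *
      ∏ kk ∈ Finset.range d, (1 - (ℓ : ℝ) ^ (-((kk : ℤ) + 1) - (n : ℤ) + (j : ℤ))) := by
    unfold gp
    rw [← hkd, Finset.prod_range_add]
    congr 1
    refine Finset.prod_congr rfl (fun i _ => ?_)
    congr 1
    congr 1
    omega
  have hj' : ∏ kk ∈ Finset.range j, (1 - (ℓ : ℝ) ^ (-((kk : ℤ) + 1)))⁻¹ = (gp ℓ j)⁻¹ := by
    rw [Finset.prod_inv_distrib]
    congr 1
    exact Finset.prod_congr rfl (fun i _ => by rw [show -((i : ℤ) + 1) = -(i:ℤ) - 1 by ring])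
  have hn' : ∏ kk ∈ Finset.range n, (1 - (ℓ : ℝ) ^ (-((kk : ℤ) + 1))) = gp ℓ n :=
    Finset.prod_congr rfl (fun i _ => by rw [show -((i : ℤ) + 1) = -(i:ℤ) - 1 by ring])
  rw [Finset.prod_div_distrib, hmidd, hj', hn',
    show (∏ kk ∈ Finset.range d, (1 - (ℓ : ℝ) ^ (-((kk : ℤ) + 1) - (n : ℤ) + (j : ℤ))))
      = gp ℓ r / gp ℓ k from by rw [hnum, mul_comm, mul_div_assoc, div_self (gp_ne hℓ k), mul_one]]
  have h1 := gp_ne hℓ n; have h2 := gp_ne hℓ r; have h3 := gp_ne hℓ j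
  have h4 := gp_ne hℓ d; have h5 := gp_ne hℓ k
  have hp1 : (ℓ:ℝ)^(k*k) ≠ 0 := by positivity
  have hp2 : (ℓ:ℝ)^(r*n) ≠ 0 := by positivity
  have hpow' : (ℓ:ℝ)^(-(j:ℤ)*((j:ℤ)-u))
      = (ℓ:ℝ)^(n*k) * (ℓ:ℝ)^(r*k) / ((ℓ:ℝ)^(k*k) * (ℓ:ℝ)^(r*n)) := by
    rw [eq_div_iff (by positivity)]
    linear_combination -hpow
  rw [hpow', div_one]
  field_simp

lemma card_subtype_lin {F : Type*} [Field F] [Fintype F] [DecidableEq F] {m n : ℕ}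
    (P : ((Fin n → F) →ₗ[F] (Fin m → F)) → Prop) :
    Nat.card {M : Matrix (Fin m) (Fin n) F // P M.mulVecLin} = Nat.card {f // P f} :=
  Nat.card_congr (Equiv.subtypeEquiv (Matrix.toLin' :
    Matrix (Fin m) (Fin n) F ≃ₗ[F] _).toEquiv (fun M => by
      simp only [LinearEquiv.coe_toEquiv, Matrix.toLin'_apply']))

lemma cast_prod_sub (ℓ a b : ℕ) (h1 : 1 ≤ ℓ) (hba : b ≤ a) :
    ((∏ i ∈ range b, (ℓ^a - ℓ^i) : ℕ) : ℝ) = ∏ i ∈ range b, ((ℓ:ℝ)^a - (ℓ:ℝ)^i) := by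
  rw [Nat.cast_prod]
  refine Finset.prod_congr rfl fun i hi => ?_
  have hi' := Finset.mem_range.1 hi
  rw [Nat.cast_sub (Nat.pow_le_pow_right h1 (by omega))]
  push_cast
  ring


/-- The probability that a uniformly random `(n-u) × n` matrix over `𝔽_ℓ` has kernel
of dimension exactly `j`. Here `r` is the natural number with `(r : ℤ) = n - u` and
`d` the natural number with `(d : ℤ) = j - u`. -/
theorem stmt_0 (ℓ : ℕ) [Fact (Nat.Prime ℓ)] (n j r d : ℕ) (u : ℤ)
    (hjn : j ≤ n) (hju : u ≤ (j : ℤ)) (hr : (r : ℤ) = (n : ℤ) - u)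
    (hd : (d : ℤ) = (j : ℤ) - u) :
    (Nat.card {M : Matrix (Fin r) (Fin n) (ZMod ℓ) //
        Module.finrank (ZMod ℓ) (LinearMap.ker M.mulVecLin) = j} : ℝ) /
      (Nat.card (Matrix (Fin r) (Fin n) (ZMod ℓ)) : ℝ) =
    (ℓ : ℝ) ^ (-(j : ℤ) * ((j : ℤ) - u)) *
      (∏ k ∈ Finset.range d,
        (1 - (ℓ : ℝ) ^ (-((k : ℤ) + 1) - (n : ℤ) + (j : ℤ))) /
          (1 - (ℓ : ℝ) ^ (-((k : ℤ) + 1)))) *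
      (∏ k ∈ Finset.range j, (1 - (ℓ : ℝ) ^ (-((k : ℤ) + 1)))⁻¹) *
      (∏ k ∈ Finset.range n, (1 - (ℓ : ℝ) ^ (-((k : ℤ) + 1)))) := by
  have hp : Nat.Prime ℓ := Fact.out
  haveI : NeZero ℓ := ⟨hp.ne_zero⟩
  have hℓ2 : 2 ≤ ℓ := hp.two_le
  set k := n - j with hkdef
  have hjk : j + k = n := by omega
  have hkd : k + d = r := by omega
  have hkn : k ≤ n := by omega
  have hkr : k ≤ r := by omega
  -- counting
  have key : Nat.card {f : (Fin n → ZMod ℓ) →ₗ[ZMod ℓ] (Fin r → ZMod ℓ) //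
        Module.finrank (ZMod ℓ) (LinearMap.ker f) = j} * (∏ i ∈ range k, (ℓ^k - ℓ^i)) =
      (∏ i ∈ range k, (ℓ^n - ℓ^i)) * (∏ i ∈ range k, (ℓ^r - ℓ^i)) := by
    have h := main_fib (F := ZMod ℓ) n r j k hjk
    rw [← card_subtype_lin (fun s => Function.Surjective s),
      ← card_subtype_lin (fun s => Function.Injective s),
      card_surj n k hkn, card_inj k r hkr, card_lequiv] at h
    simp only [ZMod.card] at h
    exact h.symm
  -- cast to reals
  have hGpos : (0:ℝ) < ∏ i ∈ range k, ((ℓ:ℝ)^k - (ℓ:ℝ)^i) := by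
    apply Finset.prod_pos
    intro i hi
    have hi' := Finset.mem_range.1 hi
    have : (ℓ:ℝ)^i < (ℓ:ℝ)^k :=
      pow_lt_pow_right₀ (by exact_mod_cast hℓ2 : (1:ℝ) < ℓ) hi'
    linarith
  have hcast : (Nat.card {f : (Fin n → ZMod ℓ) →ₗ[ZMod ℓ] (Fin r → ZMod ℓ) //
        Module.finrank (ZMod ℓ) (LinearMap.ker f) = j} : ℝ) =
      ((∏ i ∈ range k, ((ℓ:ℝ)^n - (ℓ:ℝ)^i)) * (∏ i ∈ range k, ((ℓ:ℝ)^r - (ℓ:ℝ)^i))) /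
        (∏ i ∈ range k, ((ℓ:ℝ)^k - (ℓ:ℝ)^i)) := by
    rw [eq_div_iff hGpos.ne']
    have := congrArg (Nat.cast : ℕ → ℝ) key
    rwa [Nat.cast_mul, Nat.cast_mul, cast_prod_sub ℓ k k (by omega) le_rfl,
      cast_prod_sub ℓ n k (by omega) hkn, cast_prod_sub ℓ r k (by omega) hkr] at this
  have htot : (Nat.card (Matrix (Fin r) (Fin n) (ZMod ℓ)) : ℝ) = (ℓ:ℝ)^(r*n) := by
    rw [Nat.card_eq_fintype_card,
      show Fintype.card (Matrix (Fin r) (Fin n) (ZMod ℓ)) = Fintype.card (Fin r → Fin n → ZMod ℓ) from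
        Fintype.card_congr (Equiv.refl _)]
    simp only [Fintype.card_fun, Fintype.card_fin, ZMod.card]
    push_cast
    rw [← pow_mul, mul_comm n r]
  rw [card_subtype_lin (fun f => Module.finrank (ZMod ℓ) (LinearMap.ker f) = j), hcast, htot, div_div]
  exact real_id ℓ hℓ2 n j r d k u hjk hkd hd
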